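/- arXiv:2105.09407 — 5 statements merged into one kernel-verified Lean document; each statement's English description precedes it below -/
import Mathlib

section
/- Let $p > 0$ and let $\{\delta_k\}$ and $\{\gamma_k\}$ be sequences of non-negative numbers such that $\gamma_{k+1} \le \gamma_k (1 - \delta_k \gamma_k^p)$ for all $k \in \mathbb{N}$. Then $\gamma_k \le (\gamma_0^{-p} + p \sum_{i=1}^{k-1} \delta_i)^{-1/p}$ for all $k \in \mathbb{N}$. -/
open Real

/-- Bernoulli-type inequality with negative exponent: `1 + p t ≤ (1 - t)^(-p)`. -/
lemma bern_neg (p t : ℝ) (hp : 0 < p) (ht0 : 0 ≤ t) (ht1 : t < 1) :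
    1 + p * t ≤ (1 - t) ^ (-p) := by
  have h1t : 0 < 1 - t := by linarith
  rcases le_or_gt p 1 with hp1 | hp1
  · have hb : (1 - t) ^ p ≤ 1 - p * t := by
      have h := rpow_one_add_le_one_add_mul_self (s := -t) (by linarith) hp.le hp1
      rw [show (1:ℝ) + -t = 1 - t from by ring] at h
      linarith
    have hpos : (0:ℝ) < (1 - t) ^ p := rpow_pos_of_pos h1t p
    have hmul : (1 - t) ^ p * (1 + p * t) ≤ 1 := by
      nlinarith [mul_nonneg hp.le ht0]
    have h2 : (1 + p * t) ≤ ((1 - t) ^ p)⁻¹ := by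
      rw [← one_div, le_div_iff₀ hpos]
      linarith [hmul]
    rwa [rpow_neg h1t.le]
  · have hs : 0 ≤ t / (1 - t) := div_nonneg ht0 h1t.le
    have hb := one_add_mul_self_le_rpow_one_add (s := t / (1 - t)) (by linarith) hp1.le
    have heq : (1 + t / (1 - t)) = (1 - t)⁻¹ := by field_simp; ring
    calc 1 + p * t ≤ 1 + p * (t / (1 - t)) := by
          gcongr 1 + p * ?_
          rw [le_div_iff₀ h1t]
          nlinarith
      _ ≤ (1 + t / (1 - t)) ^ p := hb
      _ = (1 - t) ^ (-p) := by
          rw [heq, ← rpow_neg_one, ← rpow_mul h1t.le]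
          ring_nf

/-- Key step: if `0 ≤ x ≤ A` then `x (1 - δ x^p) ≤ (A^(-p) + p δ)^(-1/p)`. -/
lemma key_step (p δ A x : ℝ) (hp : 0 < p) (hδ : 0 ≤ δ) (hA : 0 < A)
    (hx0 : 0 ≤ x) (hxA : x ≤ A) :
    x * (1 - δ * x ^ p) ≤ (A ^ (-p) + p * δ) ^ (-(1:ℝ) / p) := by
  have hS : 0 < A ^ (-p) + p * δ := by positivity
  have hR : 0 < (A ^ (-p) + p * δ) ^ (-(1:ℝ) / p) := rpow_pos_of_pos hS _
  set y := x * (1 - δ * x ^ p) with hy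
  rcases le_or_gt y 0 with hy0 | hy0
  · linarith
  have hx : 0 < x := by
    rcases hx0.lt_or_eq with h | h
    · exact h
    · exfalso; rw [hy, ← h] at hy0; simp at hy0
  have ht1 : δ * x ^ p < 1 := by
    by_contra h
    push_neg at h
    have : y ≤ 0 := mul_nonpos_of_nonneg_of_nonpos hx0 (by linarith)
    linarith
  have ht0 : 0 ≤ δ * x ^ p := mul_nonneg hδ (rpow_nonneg hx0 p)
  have hymp : A ^ (-p) + p * δ ≤ y ^ (-p) := by
    have h1 : y ^ (-p) = x ^ (-p) * (1 - δ * x ^ p) ^ (-p) := by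
      rw [hy, mul_rpow hx0 (by linarith)]
    have h2 : 1 + p * (δ * x ^ p) ≤ (1 - δ * x ^ p) ^ (-p) :=
      bern_neg p _ hp ht0 ht1
    have h3 : x ^ (-p) * (1 + p * (δ * x ^ p)) ≤ x ^ (-p) * (1 - δ * x ^ p) ^ (-p) :=
      mul_le_mul_of_nonneg_left h2 (rpow_pos_of_pos hx _).le
    have hxx : x ^ (-p) * x ^ p = 1 := by rw [← rpow_add hx]; simp
    have h4 : x ^ (-p) * (1 + p * (δ * x ^ p)) = x ^ (-p) + p * δ := by
      have : x ^ (-p) * (1 + p * (δ * x ^ p))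
          = x ^ (-p) + p * δ * (x ^ (-p) * x ^ p) := by ring
      rw [this, hxx, mul_one]
    have h5 : A ^ (-p) ≤ x ^ (-p) :=
      rpow_le_rpow_of_nonpos hx hxA (by linarith)
    calc A ^ (-p) + p * δ ≤ x ^ (-p) + p * δ := by linarith
      _ = x ^ (-p) * (1 + p * (δ * x ^ p)) := h4.symm
      _ ≤ x ^ (-p) * (1 - δ * x ^ p) ^ (-p) := h3
      _ = y ^ (-p) := h1.symm
  have hexp : -(1:ℝ)/p ≤ 0 := by
    have h01 : (0:ℝ) ≤ 1 / p := by positivity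
    rw [neg_div]; linarith
  have hfin := rpow_le_rpow_of_nonpos hS hymp hexp
  rwa [← rpow_mul hy0.le, show (-p) * (-(1:ℝ)/p) = 1 by field_simp, rpow_one] at hfin

theorem stmt_2 (p : ℝ) (hp : 0 < p) (δ γ : ℕ → ℝ)
    (hδ : ∀ k, 0 ≤ δ k) (hγ : ∀ k, 0 ≤ γ k) (hγ0 : 0 < γ 0)
    (hrec : ∀ k, γ (k + 1) ≤ γ k * (1 - δ k * γ k ^ p)) :
    ∀ k, γ k ≤ (γ 0 ^ (-p) + p * ∑ i ∈ Finset.Ico 1 k, δ i) ^ (-(1 : ℝ) / p) := by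
  have hsum : ∀ k, (0:ℝ) ≤ ∑ i ∈ Finset.Ico 1 k, δ i :=
    fun k => Finset.sum_nonneg fun i _ => hδ i
  intro k
  induction k with
  | zero =>
    rw [show Finset.Ico 1 0 = (∅ : Finset ℕ) from by simp, Finset.sum_empty,
      mul_zero, add_zero]
    rw [← rpow_mul hγ0.le, show (-p) * (-(1:ℝ)/p) = 1 by field_simp, rpow_one]
  | succ k ih =>
    set S : ℝ := γ 0 ^ (-p) + p * ∑ i ∈ Finset.Ico 1 k, δ i with hSdef
    have hS : 0 < S := by
      have h0 : 0 < γ 0 ^ (-p) := rpow_pos_of_pos hγ0 _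
      have := mul_nonneg hp.le (hsum k)
      rw [hSdef]; linarith
    have hA : 0 < S ^ (-(1:ℝ)/p) := rpow_pos_of_pos hS _
    have hApow : (S ^ (-(1:ℝ)/p)) ^ (-p) = S := by
      rw [← rpow_mul hS.le, show (-(1:ℝ)/p) * (-p) = 1 by field_simp, rpow_one]
    have hstep : γ k * (1 - δ k * γ k ^ p)
        ≤ ((S ^ (-(1:ℝ)/p)) ^ (-p) + p * δ k) ^ (-(1:ℝ)/p) :=
      key_step p (δ k) (S ^ (-(1:ℝ)/p)) (γ k) hp (hδ k) hA (hγ k) ih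
    rw [hApow] at hstep
    have hsum' : ∑ i ∈ Finset.Ico 1 (k+1), δ i ≤ (∑ i ∈ Finset.Ico 1 k, δ i) + δ k := by
      rcases Nat.eq_zero_or_pos k with rfl | hk
      · have h1 : Finset.Ico 1 (0+1) = (∅ : Finset ℕ) := by simp
        have h2 : Finset.Ico 1 0 = (∅ : Finset ℕ) := by simp
        rw [h1, h2]
        simpa using hδ 0
      · rw [Finset.sum_Ico_succ_top hk]
    have hSle : γ 0 ^ (-p) + p * ∑ i ∈ Finset.Ico 1 (k+1), δ i ≤ S + p * δ k := by
      rw [hSdef]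
      have := mul_le_mul_of_nonneg_left hsum' hp.le
      linarith
    have hSpos : 0 < γ 0 ^ (-p) + p * ∑ i ∈ Finset.Ico 1 (k+1), δ i := by
      have h0 : 0 < γ 0 ^ (-p) := rpow_pos_of_pos hγ0 _
      have := mul_nonneg hp.le (hsum (k+1))
      linarith
    have hexp : -(1:ℝ)/p ≤ 0 := by
      have h01 : (0:ℝ) ≤ 1 / p := by positivity
      rw [neg_div]; linarith
    have hmono := rpow_le_rpow_of_nonpos hSpos hSle hexp
    calc γ (k+1) ≤ γ k * (1 - δ k * γ k ^ p) := hrec k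
      _ ≤ (S + p * δ k) ^ (-(1:ℝ)/p) := hstep
      _ ≤ _ := hmono
end

section
/- Let $f_1 : \mathbb{R}^n \to \mathbb{R}$ be convex and differentiable with $L_{f_1}$-Lipschitz gradient, $g_1$ proper lower semicontinuous convex, $\varphi_1 = f_1 + g_1$, and $T_t(x) = \mathrm{prox}_{t g_1}(x - t\nabla f_1(x))$ for $t \in (0, 1/L_{f_1}]$. Then for every $x \in \mathrm{dom}(\partial\varphi_1)$ one has $\|x - T_t(x)\| \le t \, d(0, \partial\varphi_1(x))$, where $d(0, \partial\varphi_1(x))$ is the minimal norm of a subgradient of $\varphi_1$ at $x$. -/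
set_option maxHeartbeats 1000000

lemma quad_id {E : Type*} [NormedAddCommGroup E] [InnerProductSpace ℝ E] (a b w : E) (l : ℝ) :
    ‖(1-l)•a + l•b - w‖^2 = (1-l)*‖a-w‖^2 + l*‖b-w‖^2 - l*(1-l)*‖a-b‖^2 := by
  have h : (1-l)•a + l•b - w = (1-l)•(a-w) + l•(b-w) := by module
  have h3 : ‖a-b‖^2 = ‖a-w‖^2 - 2*(inner ℝ (a-w) (b-w) : ℝ) + ‖b-w‖^2 := by
    have h2 : a - b = (a-w) - (b-w) := by abel
    rw [h2, norm_sub_sq_real]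
  rw [h, norm_add_sq_real, norm_smul, norm_smul, real_inner_smul_left, real_inner_smul_right, h3]
  simp only [Real.norm_eq_abs, mul_pow, sq_abs]
  ring

lemma ereal_fin {e : EReal} (hb : e ≠ ⊥) {c : EReal} (hc : c ≠ ⊤) (h : e ≤ c) :
    ∃ r : ℝ, e = (r:EReal) :=
  ⟨e.toReal, (EReal.coe_toReal (fun h' => hc (top_le_iff.1 (h' ▸ h))) hb).symm⟩

theorem stmt_10 (n : ℕ) (f₁ : EuclideanSpace ℝ (Fin n) → ℝ)
    (gradf₁ : EuclideanSpace ℝ (Fin n) → EuclideanSpace ℝ (Fin n))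
    (g₁ : EuclideanSpace ℝ (Fin n) → EReal)
    (Lf t : ℝ) (hLf : 0 < Lf)
    (hfconv : ConvexOn ℝ Set.univ f₁)
    (hgrad : ∀ x, HasGradientAt f₁ (gradf₁ x) x)
    (hflip : ∀ x y, ‖gradf₁ x - gradf₁ y‖ ≤ Lf * ‖x - y‖)
    (hgproper : (∀ x, g₁ x ≠ ⊥) ∧ ∃ x, g₁ x ≠ ⊤)
    (hglsc : LowerSemicontinuous g₁)
    (hgconv : ∀ x y, ∀ a b : ℝ, 0 ≤ a → 0 ≤ b → a + b = 1 →
      g₁ (a • x + b • y) ≤ (a : EReal) * g₁ x + (b : EReal) * g₁ y)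
    (ht : t ∈ Set.Ioc (0 : ℝ) (1 / Lf))
    (Tt : EuclideanSpace ℝ (Fin n) → EuclideanSpace ℝ (Fin n))
    -- Tt x is the proximal point of t•g₁ at x - t∇f₁(x):
    (hTt : ∀ x u, (t : EReal) * g₁ (Tt x) + ((‖Tt x - (x - t • gradf₁ x)‖ ^ 2 / 2 : ℝ) : EReal)
      ≤ (t : EReal) * g₁ u + ((‖u - (x - t • gradf₁ x)‖ ^ 2 / 2 : ℝ) : EReal))
    -- φ₁ = f₁ + g₁ and its convex subdifferential at x:
    (x : EuclideanSpace ℝ (Fin n))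
    (hdom : Set.Nonempty {z : EuclideanSpace ℝ (Fin n) |
      ∀ y, ((f₁ x : EReal) + g₁ x) + ((inner ℝ z (y - x) : ℝ) : EReal) ≤ (f₁ y : EReal) + g₁ y}) :
    ‖x - Tt x‖ ≤ t * Metric.infDist 0 {z : EuclideanSpace ℝ (Fin n) |
      ∀ y, ((f₁ x : EReal) + g₁ x) + ((inner ℝ z (y - x) : ℝ) : EReal) ≤ (f₁ y : EReal) + g₁ y} := by
  obtain ⟨ht0, htL⟩ := ht
  obtain ⟨hbot, y₀, hy₀⟩ := hgproper
  obtain ⟨gy₀, hgy₀⟩ : ∃ r : ℝ, g₁ y₀ = (r:EReal) :=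
    ⟨(g₁ y₀).toReal, (EReal.coe_toReal hy₀ (hbot y₀)).symm⟩
  set S := {z : EuclideanSpace ℝ (Fin n) |
      ∀ y, ((f₁ x : EReal) + g₁ x) + ((inner ℝ z (y - x) : ℝ) : EReal) ≤ (f₁ y : EReal) + g₁ y}
    with hS
  set p := Tt x with hpdef
  set w := x - t • gradf₁ x with hwdef
  -- g₁ x is finite
  have hgxfin : ∃ r : ℝ, g₁ x = (r:EReal) := by
    obtain ⟨z, hz⟩ := hdom
    have hz' := hz y₀
    by_contra h
    have htop : g₁ x = ⊤ := by
      by_contra h'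
      exact h ⟨(g₁ x).toReal, (EReal.coe_toReal h' (hbot x)).symm⟩
    rw [htop, hgy₀] at hz'
    simp at hz'
    rw [← EReal.coe_add] at hz'
    exact EReal.coe_ne_top _ hz'
  obtain ⟨gx, hgx⟩ := hgxfin
  -- g₁ p is finite
  have hgpfin : ∃ r : ℝ, g₁ p = (r:EReal) := by
    have hT := hTt x x
    rw [← hpdef, ← hwdef, hgx] at hT
    by_contra h
    have htop : g₁ p = ⊤ := by
      by_contra h'
      exact h ⟨(g₁ p).toReal, (EReal.coe_toReal h' (hbot p)).symm⟩
    rw [htop, EReal.coe_mul_top_of_pos ht0] at hT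
    simp only [EReal.top_add_coe, top_le_iff] at hT
    rw [← EReal.coe_mul, ← EReal.coe_add] at hT
    exact EReal.coe_ne_top _ hT
  obtain ⟨gp, hgp⟩ := hgpfin
  -- Step C: strong prox inequality at u = x
  have hC : t*gp + ‖p - w‖^2/2 + ‖p - x‖^2/2 ≤ t*gx + ‖x - w‖^2/2 := by
    refine le_of_forall_pos_le_add ?_
    intro ε hε
    set l := min (1/2 : ℝ) (ε/(‖p-x‖^2+1)) with hl
    have hl0 : 0 < l := lt_min one_half_pos (div_pos hε (by positivity))
    have hl1 : l < 1 := lt_of_le_of_lt (min_le_left _ _) (by norm_num)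
    have hconv := hgconv p x (1-l) l (by linarith) hl0.le (by ring)
    rw [hgp, hgx, ← EReal.coe_mul, ← EReal.coe_mul, ← EReal.coe_add] at hconv
    obtain ⟨gu, hgu⟩ := ereal_fin (hbot _) (EReal.coe_ne_top _) hconv
    rw [hgu, EReal.coe_le_coe_iff] at hconv
    have hT := hTt x ((1-l)•p + l•x)
    rw [← hpdef, ← hwdef, hgp, hgu, ← EReal.coe_mul, ← EReal.coe_mul, ← EReal.coe_add,
      ← EReal.coe_add, EReal.coe_le_coe_iff] at hT
    have hq := quad_id p x w l
    have hconv' : t * gu ≤ t * ((1-l)*gp + l*gx) := by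
      exact mul_le_mul_of_nonneg_left hconv ht0.le
    have hmul : l * (t*gp + ‖p - w‖^2/2 + (1-l)*‖p - x‖^2/2)
        ≤ l * (t*gx + ‖x - w‖^2/2) := by nlinarith [hT, hconv', hq]
    have hdiv := le_of_mul_le_mul_left hmul hl0
    have hle : l * ‖p-x‖^2 ≤ ε := by
      have h2 : l ≤ ε/(‖p-x‖^2+1) := min_le_right _ _
      rw [le_div_iff₀ (by positivity)] at h2
      nlinarith [sq_nonneg ‖p-x‖, hl0.le]
    nlinarith [hdiv, hle]
  -- Key: for each subgradient z, ‖x - p‖ ≤ t * ‖z‖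
  have hkey : ∀ z ∈ S, ‖x - p‖ ≤ t * ‖z‖ := by
    intro z hz
    rw [hS, Set.mem_setOf_eq] at hz
    -- Step B at y = p : gx + ⟪z - ∇f x, p - x⟫ ≤ gp
    have hsub : gx + (inner ℝ (z - gradf₁ x) (p - x) : ℝ) ≤ gp := by
      have key : gx + (inner ℝ z (p - x) : ℝ) - gp ≤ (inner ℝ (gradf₁ x) (p - x) : ℝ) := by
        set φ : ℝ → ℝ := fun s => f₁ (x + s • (p - x)) with hφ
        have hline : HasDerivAt (fun s : ℝ => x + s • (p - x)) (p - x) 0 := by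
          simpa using ((hasDerivAt_id (0:ℝ)).smul_const (p - x)).const_add x
        have hderiv : HasDerivAt φ (inner ℝ (gradf₁ x) (p - x) : ℝ) 0 := by
          have h2 : HasFDerivAt f₁ ((InnerProductSpace.toDual ℝ _) (gradf₁ x))
              (x + (0:ℝ) • (p - x)) := by
            simpa using (hgrad x).hasFDerivAt
          exact h2.comp_hasDerivAt (0:ℝ) hline
        have hslope := hasDerivAt_iff_tendsto_slope.1 hderiv
        have hslope' : Filter.Tendsto (slope φ 0) (nhdsWithin 0 (Set.Ioi 0))
            (nhds (inner ℝ (gradf₁ x) (p - x) : ℝ)) :=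
          hslope.mono_left (nhdsWithin_mono 0 (fun s hs => ne_of_gt hs))
        refine ge_of_tendsto hslope' ?_
        filter_upwards [Ioo_mem_nhdsGT_of_mem (Set.mem_Ico.2 ⟨le_refl (0:ℝ), one_pos⟩)]
          with s hs
        obtain ⟨hs0, hs1⟩ := hs
        have hpt : x + s • (p - x) = (1-s) • x + s • p := by module
        have hconv := hgconv x p (1-s) s (by linarith) hs0.le (by ring)
        rw [hgx, hgp, ← EReal.coe_mul, ← EReal.coe_mul, ← EReal.coe_add, ← hpt] at hconv
        obtain ⟨gu, hgu⟩ := ereal_fin (hbot _) (EReal.coe_ne_top _) hconv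
        rw [hgu, EReal.coe_le_coe_iff] at hconv
        have hzz := hz (x + s • (p - x))
        rw [hgx, hgu] at hzz
        have hip : (inner ℝ z (x + s • (p - x) - x) : ℝ) = s * (inner ℝ z (p - x) : ℝ) := by
          rw [show x + s • (p - x) - x = s • (p - x) by abel, inner_smul_right]
        rw [hip, ← EReal.coe_add, ← EReal.coe_add, ← EReal.coe_add,
          EReal.coe_le_coe_iff] at hzz
        have hφs : φ s = f₁ (x + s • (p - x)) := rfl
        have hφ0 : φ 0 = f₁ x := by simp [hφ]
        rw [slope_def_field, sub_zero, le_div_iff₀ hs0]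
        rw [hφs, hφ0]
        nlinarith [hzz, hconv]
      rw [inner_sub_left]
      linarith
    -- Step D
    have hinner : ‖x - p‖^2 ≤ t * (inner ℝ z (x - p) : ℝ) := by
      have e0 : p - w = (p - x) + t • gradf₁ x := by rw [hwdef]; abel
      have e1 : ‖p - w‖^2
          = ‖p - x‖^2 + 2*t*(inner ℝ (gradf₁ x) (p-x) : ℝ) + t^2*‖gradf₁ x‖^2 := by
        rw [e0, norm_add_sq_real, real_inner_smul_right, norm_smul, Real.norm_eq_abs,
          mul_pow, sq_abs, real_inner_comm]
        ring
      have e2 : ‖x - w‖^2 = t^2*‖gradf₁ x‖^2 := by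
        have h' : x - w = t • gradf₁ x := by rw [hwdef]; abel
        rw [h', norm_smul, Real.norm_eq_abs, mul_pow, sq_abs]
      have e3 : (inner ℝ (z - gradf₁ x) (p - x) : ℝ)
          = (inner ℝ z (p - x) : ℝ) - (inner ℝ (gradf₁ x) (p-x) : ℝ) := inner_sub_left _ _ _
      have e4 : (inner ℝ z (x - p) : ℝ) = -(inner ℝ z (p - x) : ℝ) := by
        rw [show x - p = -(p-x) by abel, inner_neg_right]
      have e5 : ‖x - p‖ = ‖p - x‖ := norm_sub_rev _ _
      have hsub' : t * gx + t*(inner ℝ z (p-x) : ℝ) - t*(inner ℝ (gradf₁ x) (p-x) : ℝ)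
          ≤ t * gp := by nlinarith [mul_le_mul_of_nonneg_left hsub ht0.le, e3]
      rw [e4, e5]
      rw [e1, e2] at hC
      linarith [hC, hsub']
    have hcs : (inner ℝ z (x - p) : ℝ) ≤ ‖z‖ * ‖x - p‖ := real_inner_le_norm _ _
    rcases eq_or_lt_of_le (norm_nonneg (x - p)) with h0 | h0
    · rw [← h0]; positivity
    · nlinarith [hinner, mul_le_mul_of_nonneg_left hcs ht0.le]
  -- Step E
  have h1 : ‖x - p‖ / t ≤ Metric.infDist 0 S := by
    refine le_of_not_gt fun hlt => ?_
    obtain ⟨z, hzS, hdlt⟩ := (Metric.infDist_lt_iff hdom).1 hlt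
    rw [dist_zero_left] at hdlt
    have := hkey z hzS
    rw [lt_div_iff₀ ht0] at hdlt
    nlinarith [hdlt, this]
  calc ‖x - p‖ = t * (‖x - p‖ / t) := by field_simp
    _ ≤ t * Metric.infDist 0 S := by
        exact mul_le_mul_of_nonneg_left h1 ht0.le
end

section
/- Let $f : \mathbb{R}^n \to \mathbb{R}$ be convex and differentiable with $L_f$-Lipschitz gradient, $g$ proper lower semicontinuous convex, $\phi = f + g$, and for $t \in (0, 1/L_f]$ define $\psi(x) = \frac{1}{t}(x - \mathrm{prox}_{tg}(x - t\nabla f(x)))$. Then $\phi(x - t\psi(x)) - \phi(y) \le \frac{1}{2t}\|x - y\|^2$ for all $x, y \in \mathbb{R}^n$. -/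
open scoped RealInnerProductSpace

variable {E : Type*} [NormedAddCommGroup E] [InnerProductSpace ℝ E] [CompleteSpace E]

lemma line_hasDerivAt (f : E → ℝ) (gf : E) {z : E} (hg : HasGradientAt f gf z)
    (x d : E) (s : ℝ) (hz : z = x + s • d) :
    HasDerivAt (fun s : ℝ => f (x + s • d)) ⟪gf, d⟫ s := by
  have hc : HasDerivAt (fun s : ℝ => x + s • d) d s := by
    simpa using ((hasDerivAt_id s).smul_const d).const_add x
  subst hz
  have := hg.hasFDerivAt.comp_hasDerivAt s hc
  simpa [InnerProductSpace.toDual_apply_apply, Function.comp_def] using this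

lemma grad_convex_ineq (f : E → ℝ) (hf : ConvexOn ℝ Set.univ f)
    {a x : E} (ha : HasGradientAt f a x) (y : E) :
    f x + ⟪a, y - x⟫ ≤ f y := by
  set d := y - x with hd
  have hderiv : HasDerivAt (fun s : ℝ => f (x + s • d)) ⟪a, d⟫ 0 :=
    line_hasDerivAt f a ha x d 0 (by simp)
  have hconv : ConvexOn ℝ Set.univ (fun s : ℝ => f (x + s • d)) := by
    have h := hf.comp_affineMap (AffineMap.lineMap x y)
    have : (fun s : ℝ => f (x + s • d)) = f ∘ (AffineMap.lineMap x y : ℝ →ᵃ[ℝ] E) := by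
      funext s
      simp [AffineMap.lineMap_apply, hd, add_comm]
    rw [this]
    simpa using h
  have hs := hconv.le_slope_of_hasDerivWithinAt_Ioi (Set.mem_univ 0) (Set.mem_univ 1)
    one_pos hderiv.hasDerivWithinAt
  have : slope (fun s : ℝ => f (x + s • d)) 0 1 = f y - f x := by
    simp [slope_def_field, hd]
  rw [this] at hs
  linarith

lemma descent_lemma (f : E → ℝ) (gradf : E → E) (Lf : ℝ) (hLf : 0 ≤ Lf)
    (hgrad : ∀ x, HasGradientAt f (gradf x) x)
    (hlip : ∀ x y, ‖gradf x - gradf y‖ ≤ Lf * ‖x - y‖) (x y : E) :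
    f y ≤ f x + ⟪gradf x, y - x⟫ + Lf / 2 * ‖y - x‖ ^ 2 := by
  set d := y - x with hd
  set χ : ℝ → ℝ := fun s => f (x + s • d) - s * ⟪gradf x, d⟫ - Lf * ‖d‖ ^ 2 / 2 * s ^ 2 with hχ
  have hder : ∀ s : ℝ, HasDerivAt χ
      (⟪gradf (x + s • d), d⟫ - ⟪gradf x, d⟫ - Lf * ‖d‖ ^ 2 * s) s := by
    intro s
    have h1 : HasDerivAt (fun s : ℝ => f (x + s • d)) ⟪gradf (x + s • d), d⟫ s :=
      line_hasDerivAt f _ (hgrad _) x d s rfl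
    have h2 : HasDerivAt (fun s : ℝ => s * ⟪gradf x, d⟫) ⟪gradf x, d⟫ s := by
      simpa using hasDerivAt_mul_const (x := s) ⟪gradf x, d⟫
    have h3 : HasDerivAt (fun s : ℝ => Lf * ‖d‖ ^ 2 / 2 * s ^ 2)
        (Lf * ‖d‖ ^ 2 * s) s := by
      have := (hasDerivAt_pow 2 s).const_mul (Lf * ‖d‖ ^ 2 / 2)
      rw [show Lf * ‖d‖ ^ 2 * s = Lf * ‖d‖ ^ 2 / 2 * (((2:ℕ):ℝ) * s ^ (2 - 1)) by push_cast; ring]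
      exact this
    exact (h1.sub h2).sub h3
  have hanti : AntitoneOn χ (Set.Icc 0 1) := by
    apply antitoneOn_of_deriv_nonpos (convex_Icc 0 1)
    · exact fun s _ => ((hder s).continuousAt).continuousWithinAt
    · exact fun s _ => ((hder s).differentiableAt).differentiableWithinAt
    · intro s hs
      rw [interior_Icc] at hs
      rw [(hder s).deriv]
      have h1 : ⟪gradf (x + s • d), d⟫ - ⟪gradf x, d⟫
          = ⟪gradf (x + s • d) - gradf x, d⟫ := (inner_sub_left _ _ _).symm
      have h2 := real_inner_le_norm (gradf (x + s • d) - gradf x) d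
      have h3 := hlip (x + s • d) x
      have h4 : ‖x + s • d - x‖ = s * ‖d‖ := by
        rw [add_sub_cancel_left, norm_smul, Real.norm_eq_abs, abs_of_pos hs.1]
      rw [h4] at h3
      have h5 : ‖gradf (x + s • d) - gradf x‖ * ‖d‖ ≤ Lf * (s * ‖d‖) * ‖d‖ :=
        mul_le_mul_of_nonneg_right h3 (norm_nonneg _)
      rw [h1]
      nlinarith [h2]
  have h01 := hanti (Set.mem_Icc.2 ⟨le_refl 0, zero_le_one⟩)
    (Set.mem_Icc.2 ⟨zero_le_one, le_refl 1⟩) zero_le_one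
  simp only [hχ, zero_smul, add_zero, one_smul, zero_mul, sub_zero, one_mul, zero_pow,
    one_pow, mul_one, mul_zero] at h01
  have hxy : x + d = y := by rw [hd]; abel
  rw [hxy] at h01
  linarith

theorem stmt_11 (n : ℕ) (f : EuclideanSpace ℝ (Fin n) → ℝ)
    (gradf : EuclideanSpace ℝ (Fin n) → EuclideanSpace ℝ (Fin n))
    (g : EuclideanSpace ℝ (Fin n) → EReal)
    (Lf t : ℝ) (hLf : 0 < Lf)
    (hfconv : ConvexOn ℝ Set.univ f)
    (hgrad : ∀ x, HasGradientAt f (gradf x) x)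
    (hflip : ∀ x y, ‖gradf x - gradf y‖ ≤ Lf * ‖x - y‖)
    (hgproper : (∀ x, g x ≠ ⊥) ∧ ∃ x, g x ≠ ⊤)
    (hglsc : LowerSemicontinuous g)
    (hgconv : ∀ x y, ∀ a b : ℝ, 0 ≤ a → 0 ≤ b → a + b = 1 →
      g (a • x + b • y) ≤ (a : EReal) * g x + (b : EReal) * g y)
    (ht : t ∈ Set.Ioc (0 : ℝ) (1 / Lf))
    (prox : EuclideanSpace ℝ (Fin n) → EuclideanSpace ℝ (Fin n))
    -- prox x is the proximal point of t•g at x - t∇f(x), so that x - t•ψ(x) = prox x: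
    (hprox : ∀ x u, (t : EReal) * g (prox x) + ((‖prox x - (x - t • gradf x)‖ ^ 2 / 2 : ℝ) : EReal)
      ≤ (t : EReal) * g u + ((‖u - (x - t • gradf x)‖ ^ 2 / 2 : ℝ) : EReal))
    (ψ : EuclideanSpace ℝ (Fin n) → EuclideanSpace ℝ (Fin n))
    (hψ : ∀ x, ψ x = (1 / t) • (x - prox x)) :
    ∀ x y, (f (x - t • ψ x) : EReal) + g (x - t • ψ x)
      ≤ ((f y : EReal) + g y) + ((1 / (2 * t) * ‖x - y‖ ^ 2 : ℝ) : EReal) := by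
  intro x y
  have htpos : (0:ℝ) < t := ht.1
  have htne : t ≠ 0 := ne_of_gt htpos
  set p := prox x with hp
  have hstep : x - t • ψ x = p := by
    rw [hψ x, smul_smul, mul_one_div_cancel htne, one_smul, sub_sub_cancel]
  rw [hstep]
  by_cases hgy : g y = ⊤
  · have hrhs : (f y : EReal) + g y + ((1 / (2 * t) * ‖x - y‖ ^ 2 : ℝ) : EReal) = ⊤ := by
      rw [hgy, EReal.add_top_of_ne_bot (EReal.coe_ne_bot _), EReal.top_add_of_ne_bot (EReal.coe_ne_bot _)]
    rw [hrhs]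
    exact le_top
  · obtain ⟨b, hb⟩ : ∃ b : ℝ, g y = (b : EReal) :=
      ⟨(g y).toReal, (EReal.coe_toReal hgy (hgproper.1 y)).symm⟩
    have hpr := hprox x y
    rw [← hp] at hpr
    have hgp_ne_top : g p ≠ ⊤ := by
      intro h
      rw [h, hb, EReal.mul_top_of_pos (by exact_mod_cast htpos),
        EReal.top_add_of_ne_bot (by simp), ← EReal.coe_mul, ← EReal.coe_add] at hpr
      exact EReal.coe_ne_top _ (top_le_iff.mp hpr)
    obtain ⟨a, ha⟩ : ∃ a : ℝ, g p = (a : EReal) :=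
      ⟨(g p).toReal, (EReal.coe_toReal hgp_ne_top (hgproper.1 p)).symm⟩
    rw [ha, hb] at hpr ⊢
    rw [← EReal.coe_mul, ← EReal.coe_mul, ← EReal.coe_add, ← EReal.coe_add,
      EReal.coe_le_coe_iff] at hpr
    rw [← EReal.coe_add, ← EReal.coe_add, ← EReal.coe_add, EReal.coe_le_coe_iff]
    -- now a real inequality
    have hconv := grad_convex_ineq f hfconv (hgrad x) y
    have hdesc := descent_lemma f gradf Lf hLf.le hgrad hflip x p
    have hG : inner (𝕜 := ℝ) (gradf x) (gradf x) = ‖gradf x‖ ^ 2 := real_inner_self_eq_norm_sq _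
    have e1 : ‖y - (x - t • gradf x)‖ ^ 2
        = ‖y - x‖ ^ 2 + 2 * (t * (inner (𝕜 := ℝ) (gradf x) (y - x))) + t ^ 2 * ‖gradf x‖ ^ 2 := by
      have hv : y - (x - t • gradf x) = (y - x) + t • gradf x := by abel
      rw [hv, norm_add_sq_real, real_inner_smul_right, norm_smul, Real.norm_eq_abs,
        mul_pow, sq_abs, real_inner_comm (y - x) (gradf x)]
    have e2 : ‖p - (x - t • gradf x)‖ ^ 2
        = ‖p - x‖ ^ 2 + 2 * (t * (inner (𝕜 := ℝ) (gradf x) (p - x))) + t ^ 2 * ‖gradf x‖ ^ 2 := by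
      have hv : p - (x - t • gradf x) = (p - x) + t • gradf x := by abel
      rw [hv, norm_add_sq_real, real_inner_smul_right, norm_smul, Real.norm_eq_abs,
        mul_pow, sq_abs, real_inner_comm (p - x) (gradf x)]
    rw [e1, e2] at hpr
    have h3 : t * Lf ≤ 1 := by
      have h := ht.2
      rw [le_div_iff₀ hLf] at h
      exact h
    have hP : (0:ℝ) ≤ ‖p - x‖ ^ 2 := sq_nonneg _
    have h3P : t * Lf * ‖p - x‖ ^ 2 ≤ ‖p - x‖ ^ 2 := by
      calc t * Lf * ‖p - x‖ ^ 2 ≤ 1 * ‖p - x‖ ^ 2 := mul_le_mul_of_nonneg_right h3 hP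
        _ = ‖p - x‖ ^ 2 := one_mul _
    have hD : ‖x - y‖ = ‖y - x‖ := norm_sub_rev _ _
    rw [hD]
    have h2t : (0:ℝ) < 2 * t := by positivity
    have key : 2 * t * (f p + a) ≤ 2 * t * (f y + b) + ‖y - x‖ ^ 2 := by
      have hd1 := mul_le_mul_of_nonneg_left hdesc h2t.le
      have hc1 := mul_le_mul_of_nonneg_left hconv h2t.le
      nlinarith [hd1, hc1, hpr, h3P]
    have : f y + b + 1 / (2 * t) * ‖y - x‖ ^ 2
        = (2 * t * (f y + b) + ‖y - x‖ ^ 2) / (2 * t) := by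
      field_simp
    rw [this, le_div_iff₀ h2t]
    linarith [key]
end

section
/- Let $\Omega \subseteq \mathbb{R}^n$ be nonempty closed convex and suppose the sequence $\{x^k\}$ is Fejér monotone with respect to $\Omega$ (i.e., $\|x^{k+1} - x\| \le \|x^k - x\|$ for all $x \in \Omega$ and all $k$) and converges in norm to some $x \in \Omega$. Then $\|x^k - x\| \le 2\, d(x^k, \Omega)$ for all $k$. -/
open Filter

theorem stmt_13 (n : ℕ) (Ω : Set (EuclideanSpace ℝ (Fin n)))
    (hne : Ω.Nonempty) (hcl : IsClosed Ω) (hconv : Convex ℝ Ω)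
    (x : ℕ → EuclideanSpace ℝ (Fin n)) (p : EuclideanSpace ℝ (Fin n))
    (hfejer : ∀ k, ∀ z ∈ Ω, ‖x (k + 1) - z‖ ≤ ‖x k - z‖)
    (hp : p ∈ Ω) (hlim : Tendsto x atTop (nhds p)) :
    ∀ k, ‖x k - p‖ ≤ 2 * Metric.infDist (x k) Ω := by
  intro k
  have key : ∀ z ∈ Ω, ‖p - z‖ ≤ ‖x k - z‖ := by
    intro z hz
    have mono : ∀ m, k ≤ m → ‖x m - z‖ ≤ ‖x k - z‖ := by
      intro m hm
      induction m with
      | zero => simpa [Nat.le_zero.mp hm]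
      | succ m ih =>
        rcases Nat.lt_or_ge k (m+1) with h | h
        · exact (hfejer m z hz).trans (ih (Nat.lt_succ_iff.mp h))
        · have : k = m + 1 := le_antisymm hm h
          simp [this]
    have hT : Tendsto (fun m => ‖x m - z‖) atTop (nhds ‖p - z‖) :=
      ((hlim.sub_const z).norm)
    exact le_of_tendsto hT (eventually_atTop.mpr ⟨k, mono⟩)
  have h2 : ‖x k - p‖ / 2 ≤ Metric.infDist (x k) Ω := by
    by_contra hlt
    push_neg at hlt
    obtain ⟨z, hz, hdz⟩ := (Metric.infDist_lt_iff hne).mp hlt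
    have h1 := key z hz
    have tri : dist (x k) p ≤ dist (x k) z + dist z p := dist_triangle _ _ _
    have e1 : dist z p = ‖p - z‖ := by rw [dist_eq_norm, norm_sub_rev]
    have e2 : dist (x k) z = ‖x k - z‖ := dist_eq_norm _ _
    have e3 : dist (x k) p = ‖x k - p‖ := dist_eq_norm _ _
    rw [e2] at hdz
    linarith
  linarith
end

section
/- Let $\Omega \subseteq \mathbb{R}^n$ be nonempty closed convex, let $\{x^k\}$ be Fejér monotone with respect to a superset $\mathrm{Fix}(W) \supseteq \Omega$ (for all $x\in \mathrm{Fix}(W)$, $\|x^{k+1}-x\| \le \|x^k - x\|$), and suppose there exist $\gamma > \beta > 0$, $q \in \mathbb{N}$, $\lambda > 0$ with $d^\beta(x^{(k+1)q}, \Omega) \le d^\beta(x^{kq}, \Omega) - \lambda d^\gamma(x^{kq}, \Omega)$ for all $k$. Then $d(x^{kq}, \Omega) \le C k^{-1/(\gamma - \beta)}$ for all $k \ge 1$, where $C = \left(\frac{\beta}{(\gamma-\beta)\lambda}\right)^{1/(\gamma-\beta)}$. -/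
private lemma bern_aux (p u : ℝ) (hp : 0 < p) (hu0 : 0 ≤ u) (hu1 : u < 1) :
    1 + p * u ≤ ((1 - u) ^ p)⁻¹ := by
  have h1u : 0 < 1 - u := by linarith
  have hpos : 0 < (1 - u) ^ p := Real.rpow_pos_of_pos h1u p
  have hA : 0 < 1 + p * u := by positivity
  rw [← one_div, le_div_iff₀ hpos]
  have hlog : Real.log ((1 + p * u) * (1 - u) ^ p) ≤ 0 := by
    rw [Real.log_mul (ne_of_gt hA) (ne_of_gt hpos), Real.log_rpow h1u]
    have l1 : Real.log (1 + p * u) ≤ p * u := by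
      have := Real.log_le_sub_one_of_pos hA; linarith
    have l2 : Real.log (1 - u) ≤ -u := by
      have := Real.log_le_sub_one_of_pos h1u; linarith
    nlinarith [mul_le_mul_of_nonneg_left l2 hp.le]
  calc (1 + p * u) * (1 - u) ^ p = Real.exp (Real.log ((1 + p * u) * (1 - u) ^ p)) :=
        (Real.exp_log (by positivity)).symm
    _ ≤ Real.exp 0 := Real.exp_le_exp.mpr hlog
    _ = 1 := Real.exp_zero

theorem stmt_19 (n : ℕ) (Ω FixW : Set (EuclideanSpace ℝ (Fin n)))
    (hne : Ω.Nonempty) (hcl : IsClosed Ω) (hconv : Convex ℝ Ω)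
    (hsub : Ω ⊆ FixW)
    (x : ℕ → EuclideanSpace ℝ (Fin n))
    (hfejer : ∀ k, ∀ z ∈ FixW, ‖x (k + 1) - z‖ ≤ ‖x k - z‖)
    (γ β lam : ℝ) (q : ℕ) (hβ : 0 < β) (hγβ : β < γ) (hlam : 0 < lam)
    (hrec : ∀ k : ℕ, Metric.infDist (x ((k + 1) * q)) Ω ^ β
      ≤ Metric.infDist (x (k * q)) Ω ^ β - lam * Metric.infDist (x (k * q)) Ω ^ γ) :
    ∀ k : ℕ, 1 ≤ k → Metric.infDist (x (k * q)) Ω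
      ≤ (β / ((γ - β) * lam)) ^ ((1 : ℝ) / (γ - β)) * (k : ℝ) ^ (-(1 : ℝ) / (γ - β)) := by
  set d : ℕ → ℝ := fun k => Metric.infDist (x (k * q)) Ω with hd_def
  have hd : ∀ k, 0 ≤ d k := fun k => Metric.infDist_nonneg
  set p : ℝ := (γ - β) / β with hp_def
  have hp : 0 < p := div_pos (by linarith) hβ
  have hβp : β * p = γ - β := by rw [hp_def]; field_simp [hβ.ne']
  set θ : ℕ → ℝ := fun k => d k ^ β with hθ_def
  have hθ0 : ∀ k, 0 ≤ θ k := fun k => Real.rpow_nonneg (hd k) β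
  -- recursion in product form
  have hθrec : ∀ k, θ (k + 1) ≤ θ k * (1 - lam * θ k ^ p) := by
    intro k
    have h1 : θ k ^ p = d k ^ (γ - β) := by
      rw [hθ_def]; rw [← Real.rpow_mul (hd k), hβp]
    have h2 : d k ^ γ = θ k * d k ^ (γ - β) := by
      have : γ = β + (γ - β) := by ring
      rw [hθ_def]
      calc d k ^ γ = d k ^ (β + (γ - β)) := by rw [← this]
        _ = d k ^ β * d k ^ (γ - β) :=
          Real.rpow_add' (hd k) (by simpa using (by linarith : β + (γ - β) ≠ 0))
    have := hrec k
    rw [h1]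
    calc θ (k + 1) ≤ θ k - lam * d k ^ γ := this
      _ = θ k * (1 - lam * d k ^ (γ - β)) := by rw [h2]; ring
  -- invariant
  have inv : ∀ k : ℕ, θ k = 0 ∨ (0 < θ k ∧ p * lam * k ≤ θ k ^ (-p)) := by
    intro k
    induction k with
    | zero =>
      rcases eq_or_lt_of_le (hθ0 0) with h | h
      · exact Or.inl h.symm
      · exact Or.inr ⟨h, by simpa using Real.rpow_nonneg h.le (-p)⟩
    | succ k ih =>
      rcases ih with h0 | ⟨hpos, hle⟩
      · left
        have := hθrec k
        rw [h0] at this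
        simp at this
        exact le_antisymm this (hθ0 (k + 1))
      · set u : ℝ := lam * θ k ^ p with hu_def
        have hu0 : 0 ≤ u := by positivity
        rcases le_or_gt 1 u with hu1 | hu1
        · left
          have := hθrec k
          have : θ (k + 1) ≤ 0 := le_trans this (by nlinarith [hθ0 k])
          exact le_antisymm this (hθ0 (k + 1))
        · rcases eq_or_lt_of_le (hθ0 (k + 1)) with h1 | h1
          · exact Or.inl h1.symm
          · right
            refine ⟨h1, ?_⟩
            have hfac : 0 < 1 - u := by linarith
            have hmono : (θ k * (1 - u)) ^ (-p) ≤ θ (k + 1) ^ (-p) :=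
              Real.rpow_le_rpow_of_nonpos h1 (hθrec k) (by linarith)
            have hsplit : (θ k * (1 - u)) ^ (-p) = θ k ^ (-p) * (1 - u) ^ (-p) :=
              Real.mul_rpow (hθ0 k) hfac.le
            have hinv : (1 - u) ^ (-p) = ((1 - u) ^ p)⁻¹ := Real.rpow_neg hfac.le p
            have hbern : 1 + p * u ≤ (1 - u) ^ (-p) := by
              rw [hinv]; exact bern_aux p u hp hu0 hu1
            have hθp : θ k ^ (-p) * θ k ^ p = 1 := by
              rw [Real.rpow_neg (hθ0 k)]
              exact inv_mul_cancel₀ (ne_of_gt (Real.rpow_pos_of_pos hpos p))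
            have hθnp : 0 < θ k ^ (-p) := Real.rpow_pos_of_pos hpos (-p)
            have key : θ k ^ (-p) + p * lam ≤ θ (k + 1) ^ (-p) := by
              have h2 : θ k ^ (-p) * (1 + p * u) ≤ (θ k * (1 - u)) ^ (-p) := by
                rw [hsplit]
                exact mul_le_mul_of_nonneg_left hbern hθnp.le
              have h3 : θ k ^ (-p) * (1 + p * u) = θ k ^ (-p) + p * lam := by
                rw [hu_def]
                generalize θ k ^ (-p) = A at hθp ⊢
                generalize θ k ^ p = B at hθp ⊢
                linear_combination (p * lam) * hθp
              linarith [le_trans h2 hmono]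
            have : p * lam * (↑k + 1) = p * lam * k + p * lam := by ring
            rw [Nat.cast_succ, this]
            linarith
  intro k hk
  show d k ≤ (β / ((γ - β) * lam)) ^ ((1 : ℝ) / (γ - β)) * (k : ℝ) ^ (-(1 : ℝ) / (γ - β))
  have hC : 0 < β / ((γ - β) * lam) := by
    apply div_pos hβ; exact mul_pos (by linarith) hlam
  have hkpos : (0 : ℝ) < k := by exact_mod_cast hk
  rcases inv k with h0 | ⟨hpos, hle⟩
  · have hdk : d k = 0 := by
      have := Real.rpow_eq_zero (hd k) (ne_of_gt hβ) |>.mp h0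
      exact this
    rw [hdk]
    positivity
  · -- p * lam * k > 0, θ k ≤ (p*lam*k)^(-1/p)
    have hplk : 0 < p * lam * k := by positivity
    have hmono : (θ k ^ (-p)) ^ (-1 / p) ≤ (p * lam * ↑k) ^ (-1 / p) :=
      Real.rpow_le_rpow_of_nonpos hplk hle (by
        apply div_nonpos_of_nonpos_of_nonneg <;> linarith)
    have hθid : (θ k ^ (-p)) ^ (-1 / p) = θ k := by
      rw [← Real.rpow_mul hpos.le]
      rw [show (-p) * (-1 / p) = 1 by field_simp, Real.rpow_one]
    have θle : θ k ≤ (p * lam * ↑k) ^ (-1 / p) := hθid ▸ hmono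
    have hdk : d k = θ k ^ (1 / β) := by
      rw [hθ_def, ← Real.rpow_mul (hd k), mul_one_div, div_self hβ.ne', Real.rpow_one]
    have step1 : d k ≤ ((p * lam * ↑k) ^ (-1 / p)) ^ (1 / β) := by
      rw [hdk]
      exact Real.rpow_le_rpow (hθ0 k) θle (by positivity)
    have step2 : ((p * lam * ↑k) ^ (-1 / p)) ^ (1 / β)
        = (p * lam * ↑k) ^ (-(1 : ℝ) / (γ - β)) := by
      rw [← Real.rpow_mul hplk.le]
      congr 1
      rw [div_mul_div_comm, mul_comm p β, hβp]
      ring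
    have step3 : (p * lam * ↑k) ^ (-(1 : ℝ) / (γ - β))
        = (p * lam) ^ (-(1 : ℝ) / (γ - β)) * (↑k : ℝ) ^ (-(1 : ℝ) / (γ - β)) :=
      Real.mul_rpow (by positivity) hkpos.le
    have step4 : (p * lam) ^ (-(1 : ℝ) / (γ - β))
        = (β / ((γ - β) * lam)) ^ ((1 : ℝ) / (γ - β)) := by
      have hinv : β / ((γ - β) * lam) = (p * lam)⁻¹ := by
        rw [hp_def]
        rw [div_mul_eq_mul_div, inv_div]
      rw [hinv, Real.inv_rpow (by positivity), ← Real.rpow_neg (by positivity), neg_div]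
    calc d k ≤ ((p * lam * ↑k) ^ (-1 / p)) ^ (1 / β) := step1
      _ = (p * lam * ↑k) ^ (-(1 : ℝ) / (γ - β)) := step2
      _ = (p * lam) ^ (-(1 : ℝ) / (γ - β)) * (↑k : ℝ) ^ (-(1 : ℝ) / (γ - β)) := step3
      _ = (β / ((γ - β) * lam)) ^ ((1 : ℝ) / (γ - β)) * (↑k : ℝ) ^ (-(1 : ℝ) / (γ - β)) := by
        rw [step4]
end
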